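/- Let G_1, ..., G_k be graphs with chosen vertices v_i ∈ G_i, where f(G_i) = n_i and f(G_i - v_i) = m_i. Let C be the graph obtained from the disjoint union of G_1, ..., G_k together with extra vertices w, w_1, ..., w_k, by joining w to each w_i and joining each w_i to v_i. Then f(C) = ∏_{i=1}^k (n_i − m_i) − ∏_{i=1}^k n_i and f(C - w) = ∏_{i=1}^k (n_i − m_i). -/

import Mathlib

open Finset

/- `f(G) = Σ_C (-1)^{|C|}` over all independent vertex sets `C` of `G`. -/
open Classical in
noncomputable def fgraph {V : Type*} [Fintype V] (G : SimpleGraph V) : ℤ :=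
  ∑ s ∈ Finset.univ.filter (fun s : Finset V => ∀ u ∈ s, ∀ v ∈ s, ¬ G.Adj u v),
    (-1 : ℤ) ^ s.card

/- `f` of the induced subgraph of `G` on the vertex set `A`. -/
open Classical in
noncomputable def fdel {V : Type*} [Fintype V] (G : SimpleGraph V) (A : Set V) : ℤ :=
  fgraph (G.induce A)

/-- Adjacency within the disjoint union of a family of graphs. -/
def sigmaAdj {ι : Type*} {V : ι → Type*} (G : ∀ i, SimpleGraph (V i)) :
    (Σ i, V i) → (Σ i, V i) → Prop
  | ⟨i, a⟩, ⟨j, b⟩ => ∃ h : j = i, (G i).Adj a (h ▸ b)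

/-- The simple building `S(G₁^{v₁}, …, G_k^{v_k})`: the disjoint union of the `G i`
together with a central vertex (`none`) joined to each `v i` by an edge. -/
def simpleBuilding {ι : Type*} {V : ι → Type*} (G : ∀ i, SimpleGraph (V i))
    (v : ∀ i, V i) : SimpleGraph (Option (Σ i, V i)) :=
  SimpleGraph.fromRel (fun x y => match x, y with
    | some a, some b => sigmaAdj G a b
    | some a, none => a.2 = v a.1
    | none, _ => False)

/-- The complicated building `C(G₁^{v₁}, …, G_k^{v_k})`: the disjoint union of the `G i`
together with a central vertex `w = none` and intermediate vertices `w_i = some (inr i)`,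
with edges `w – w_i` and `w_i – v_i`. -/
def complBuilding {ι : Type*} {V : ι → Type*} (G : ∀ i, SimpleGraph (V i))
    (v : ∀ i, V i) : SimpleGraph (Option ((Σ i, V i) ⊕ ι)) :=
  SimpleGraph.fromRel (fun x y => match x, y with
    | some (.inl a), some (.inl b) => sigmaAdj G a b
    | some (.inl a), some (.inr i) => a.1 = i ∧ a.2 = v a.1
    | some (.inr _), none => True
    | _, _ => False)


/-! ### Auxiliary lemmas -/

lemma fgraph_congr_inst {V : Type*} {F1 F2 : Fintype V} (G : SimpleGraph V) :
    @fgraph V F1 G = @fgraph V F2 G := by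
  have h : F1 = F2 := Subsingleton.elim _ _
  subst h
  rfl

open Classical in
lemma fgraph_eq_of_equiv {V W : Type*} [Fintype V] [Fintype W] (G : SimpleGraph V)
    (H : SimpleGraph W) (e : V ≃ W) (he : ∀ a b, G.Adj a b ↔ H.Adj (e a) (e b)) :
    fgraph G = fgraph H := by
  unfold fgraph
  refine Finset.sum_nbij' (fun s => s.map e.toEmbedding) (fun s => s.map e.symm.toEmbedding)
    ?_ ?_ ?_ ?_ ?_
  · intro s hs
    simp only [mem_filter, mem_univ, true_and, Finset.mem_map] at hs ⊢
    rintro u ⟨a, ha, rfl⟩ w ⟨b, hb, rfl⟩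
    exact fun hadj => hs a ha b hb ((he a b).2 hadj)
  · intro s hs
    simp only [mem_filter, mem_univ, true_and, Finset.mem_map] at hs ⊢
    rintro u ⟨a, ha, rfl⟩ w ⟨b, hb, rfl⟩
    intro hadj
    exact hs a ha b hb (by simpa using (he _ _).1 hadj)
  · intro s _
    simp [Finset.map_map]
  · intro s _
    simp [Finset.map_map]
  · intro s _
    simp

open Classical in
lemma fdel_eq_sum {V : Type*} [Fintype V] (G : SimpleGraph V) (A : Set V) :
    fdel G A = ∑ s ∈ Finset.univ.filter
      (fun s : Finset V => (∀ u ∈ s, u ∈ A) ∧ ∀ u ∈ s, ∀ v ∈ s, ¬ G.Adj u v),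
      (-1 : ℤ) ^ s.card := by
  unfold fdel fgraph
  refine Finset.sum_nbij' (fun t => t.map (Function.Embedding.subtype _))
    (fun s => s.subtype (· ∈ A)) ?_ ?_ ?_ ?_ ?_
  · intro t ht
    simp only [mem_filter, mem_univ, true_and, Finset.mem_map,
      Function.Embedding.coe_subtype] at ht ⊢
    constructor
    · rintro u ⟨a, ha, rfl⟩; exact a.2
    · rintro u ⟨a, ha, rfl⟩ w ⟨b, hb, rfl⟩ hadj
      exact ht a ha b hb (by simpa [SimpleGraph.comap_adj] using hadj)
  · intro s hs
    simp only [mem_filter, mem_univ, true_and] at hs ⊢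
    rintro ⟨a, ha⟩ haa ⟨b, hb⟩ hbb hadj
    simp only [Finset.mem_subtype] at haa hbb
    exact hs.2 a haa b hbb (by simpa using hadj)
  · intro t ht
    ext ⟨a, ha⟩
    simp only [Finset.mem_subtype, Finset.mem_map, Function.Embedding.coe_subtype,
      Subtype.exists]
    exact ⟨fun ⟨b, hb, hbt, hba⟩ => by subst hba; exact hbt, fun h => ⟨a, ha, h, rfl⟩⟩
  · intro s hs
    simp only [mem_filter, mem_univ, true_and] at hs
    ext a
    simp only [Finset.mem_map, Function.Embedding.coe_subtype, Finset.mem_subtype, Subtype.exists]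
    constructor
    · rintro ⟨b, hb, hbs, rfl⟩; exact hbs
    · intro haz; exact ⟨a, hs.1 a haz, haz, rfl⟩
  · intro t _
    simp

lemma sum_indep_eq_fdel {V : Type*} [Fintype V] (G : SimpleGraph V) (A : Set V)
    {P : Finset V → Prop} (inst : DecidablePred P)
    (hP : ∀ s, P s ↔ (∀ u ∈ s, u ∈ A) ∧ ∀ u ∈ s, ∀ w ∈ s, ¬ G.Adj u w) :
    (∑ s ∈ @Finset.filter _ P inst Finset.univ, (-1 : ℤ) ^ s.card) = fdel G A := by
  rw [fdel_eq_sum]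
  refine Finset.sum_congr ?_ (fun _ _ => rfl)
  ext s
  simp only [Finset.mem_filter, Finset.mem_univ, true_and]
  exact hP s

open Classical in
lemma sum_indep_insert_eq_fdel {V : Type*} [Fintype V] (G : SimpleGraph V) (x : V)
    {P : Finset V → Prop} (inst : DecidablePred P)
    (hP : ∀ s, P s ↔ ((∀ u ∈ s, ∀ w ∈ s, ¬ G.Adj u w) ∧ x ∈ s)) :
    (∑ s ∈ @Finset.filter _ P inst Finset.univ, (-1 : ℤ) ^ s.card)
      = - fdel G {u | u ≠ x ∧ ¬ G.Adj x u} := by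
  rw [fdel_eq_sum, ← Finset.sum_neg_distrib]
  refine Finset.sum_nbij' (fun s => s.erase x) (fun t => insert x t) ?_ ?_ ?_ ?_ ?_
  · intro s hs
    rw [Finset.mem_filter] at hs
    obtain ⟨hind, hx⟩ := (hP s).1 hs.2
    simp only [Finset.mem_filter, Finset.mem_univ, true_and, Set.mem_setOf_eq]
    exact ⟨fun u hu => ⟨Finset.ne_of_mem_erase hu, hind x hx u (Finset.mem_of_mem_erase hu)⟩,
      fun u hu w hw => hind u (Finset.mem_of_mem_erase hu) w (Finset.mem_of_mem_erase hw)⟩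
  · intro t ht
    simp only [Finset.mem_filter, Finset.mem_univ, true_and, Set.mem_setOf_eq] at ht
    obtain ⟨hmem, hind⟩ := ht
    rw [Finset.mem_filter]
    refine ⟨Finset.mem_univ _, (hP _).2 ⟨?_, Finset.mem_insert_self x t⟩⟩
    intro u hu w hw hadj
    rcases Finset.mem_insert.1 hu with hux | hu' <;> rcases Finset.mem_insert.1 hw with hwx | hw'
    · exact (G.loopless.irrefl x) (by rwa [hux, hwx] at hadj)
    · exact (hmem w hw').2 (by rwa [hux] at hadj)
    · exact (hmem u hu').2 (by rw [hwx] at hadj; exact hadj.symm)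
    · exact hind u hu' w hw' hadj
  · intro s hs
    rw [Finset.mem_filter] at hs
    exact Finset.insert_erase ((hP s).1 hs.2).2
  · intro t ht
    simp only [Finset.mem_filter, Finset.mem_univ, true_and, Set.mem_setOf_eq] at ht
    exact Finset.erase_insert fun hx => (ht.1 x hx).1 rfl
  · intro s hs
    rw [Finset.mem_filter] at hs
    have hx := ((hP s).1 hs.2).2
    rw [Finset.card_erase_of_mem hx]
    obtain ⟨k, hk⟩ : ∃ k, s.card = k + 1 :=
      ⟨s.card - 1, by have := Finset.card_pos.2 ⟨x, hx⟩; omega⟩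
    rw [hk]
    simp [pow_succ]

open Classical in
lemma fgraph_split {V : Type*} [Fintype V] (G : SimpleGraph V) (x : V) :
    fgraph G = fdel G {u | u ≠ x} - fdel G {u | u ≠ x ∧ ¬ G.Adj x u} := by
  unfold fgraph
  rw [← Finset.sum_filter_add_sum_filter_not
    (Finset.univ.filter (fun s : Finset V => ∀ u ∈ s, ∀ v ∈ s, ¬ G.Adj u v))
    (fun s => x ∉ s), Finset.filter_filter, Finset.filter_filter]
  have hP1 : ∀ s : Finset V, ((∀ u ∈ s, ∀ w ∈ s, ¬ G.Adj u w) ∧ x ∉ s) ↔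
      ((∀ u ∈ s, u ∈ {u | u ≠ x}) ∧ ∀ u ∈ s, ∀ w ∈ s, ¬ G.Adj u w) := by
    intro s
    constructor
    · rintro ⟨hind, hx⟩
      exact ⟨fun u hu h => hx (h ▸ hu), hind⟩
    · rintro ⟨hne, hind⟩
      exact ⟨hind, fun hx => hne x hx rfl⟩
  have hP2 : ∀ s : Finset V, ((∀ u ∈ s, ∀ w ∈ s, ¬ G.Adj u w) ∧ ¬ x ∉ s) ↔
      ((∀ u ∈ s, ∀ w ∈ s, ¬ G.Adj u w) ∧ x ∈ s) := by
    intro s; rw [not_not]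
  rw [sum_indep_eq_fdel G {u | u ≠ x} _ hP1, sum_indep_insert_eq_fdel G x _ hP2]
  ring

/-- The disjoint union of the graphs `G i` as a graph on the sigma type. -/
def sumGraph {ι : Type*} {V : ι → Type*} (G : ∀ i, SimpleGraph (V i)) :
    SimpleGraph (Σ i, V i) where
  Adj a b := sigmaAdj G a b
  symm := by
    constructor
    rintro ⟨i, a⟩ ⟨j, b⟩ ⟨h, hadj⟩
    subst h
    exact ⟨rfl, hadj.symm⟩
  loopless := by
    constructor
    rintro ⟨i, a⟩ ⟨h, hadj⟩
    exact (G i).loopless.irrefl a hadj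

lemma sumGraph_adj_same {ι : Type*} {V : ι → Type*} (G : ∀ i, SimpleGraph (V i))
    {i : ι} (a b : V i) : (sumGraph G).Adj ⟨i, a⟩ ⟨i, b⟩ ↔ (G i).Adj a b := by
  constructor
  · rintro ⟨h, hadj⟩; exact hadj
  · intro h; exact ⟨rfl, h⟩

open Classical in
lemma fgraph_sigma {ι : Type*} [Fintype ι] {V : ι → Type*} [∀ i, Fintype (V i)]
    (G : ∀ i, SimpleGraph (V i)) :
    fgraph (sumGraph G) = ∏ i, fgraph (G i) := by
  unfold fgraph
  rw [Finset.prod_univ_sum]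
  symm
  have hinj : ∀ (i : ι) (s : Finset (Σ j, V j)),
      Set.InjOn (Sigma.mk i : V i → Σ j, V j) (Sigma.mk i ⁻¹' ↑s) :=
    fun i s a _ b _ h => sigma_mk_injective h
  refine Finset.sum_nbij' (fun g => Finset.univ.sigma (fun i => g i))
    (fun s => fun i => s.preimage (Sigma.mk i) (hinj i _)) ?_ ?_ ?_ ?_ ?_
  · intro g hg
    simp only [Fintype.mem_piFinset, Finset.mem_filter, Finset.mem_univ, true_and] at hg ⊢
    rintro ⟨i, a⟩ ha ⟨j, b⟩ hb hadj
    obtain ⟨h, hadj⟩ := hadj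
    subst h
    rw [Finset.mem_sigma] at ha hb
    exact hg _ a ha.2 b hb.2 hadj
  · intro s hs
    simp only [Fintype.mem_piFinset, Finset.mem_filter, Finset.mem_univ, true_and] at hs ⊢
    intro i a ha b hb hadj
    rw [Finset.mem_preimage] at ha hb
    exact hs ⟨i, a⟩ ha ⟨i, b⟩ hb ((sumGraph_adj_same G a b).2 hadj)
  · intro g hg
    funext i
    ext a
    rw [Finset.mem_preimage, Finset.mem_sigma]
    simp
  · intro s hs
    ext ⟨i, a⟩
    rw [Finset.mem_sigma, Finset.mem_preimage]
    simp
  · intro g hg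
    rw [Finset.card_sigma, ← Finset.prod_pow_eq_pow_sum]

/-- `G` together with a pendant vertex `none` attached to `v`. -/
def pendant {W : Type*} (Gr : SimpleGraph W) (v : W) : SimpleGraph (Option W) where
  Adj a b := match a, b with
    | some a, some b => Gr.Adj a b
    | some a, none => a = v
    | none, some b => b = v
    | none, none => False
  symm := by
    constructor
    rintro (_ | a) (_ | b) h
    · exact h
    · exact h
    · exact h
    · exact h.symm
  loopless := by
    constructor
    rintro (_ | a) h
    · exact h
    · exact Gr.loopless.irrefl a h

def optEquiv (W : Type*) : ({u : Option W | u ≠ none} : Set (Option W)) ≃ W where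
  toFun x := x.1.get (Option.ne_none_iff_isSome.mp x.2)
  invFun w := ⟨some w, by simp [Set.mem_setOf_eq]⟩
  left_inv := by
    rintro ⟨(_ | a), h⟩
    · exact absurd rfl h
    · rfl
  right_inv := fun w => rfl

def pendantDelEquiv {W : Type*} (Gr : SimpleGraph W) (v : W) :
    ({u : Option W | u ≠ none ∧ ¬ (pendant Gr v).Adj none u} : Set (Option W))
      ≃ ({u : W | u ≠ v} : Set W) where
  toFun x := ⟨x.1.get (Option.ne_none_iff_isSome.mp x.2.1), by
    obtain ⟨(_ | a), h⟩ := x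
    · exact absurd rfl h.1
    · exact h.2⟩
  invFun w := ⟨some w.1, by simp, w.2⟩
  left_inv := by
    rintro ⟨(_ | a), h⟩
    · exact absurd rfl h.1
    · rfl
  right_inv := by
    rintro ⟨w, hw⟩
    rfl

open Classical in
lemma fgraph_pendant {W : Type*} [Fintype W] (Gr : SimpleGraph W) (v : W) :
    fgraph (pendant Gr v) = fgraph Gr - fdel Gr {u | u ≠ v} := by
  have h1 : fdel (pendant Gr v) {u | u ≠ none} = fgraph Gr := by
    unfold fdel
    refine (fgraph_congr_inst _).trans (fgraph_eq_of_equiv _ _ (optEquiv W) ?_)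
    rintro ⟨(_ | a), ha⟩ ⟨(_ | b), hb⟩
    · exact absurd rfl ha
    · exact absurd rfl ha
    · exact absurd rfl hb
    · exact Iff.rfl
  have h2 : fdel (pendant Gr v) {u | u ≠ none ∧ ¬ (pendant Gr v).Adj none u}
      = fdel Gr {u | u ≠ v} := by
    unfold fdel
    refine ((fgraph_congr_inst _).trans
      (fgraph_eq_of_equiv _ _ (pendantDelEquiv Gr v) ?_)).trans (fgraph_congr_inst _)
    rintro ⟨(_ | a), ha⟩ ⟨(_ | b), hb⟩
    · exact absurd rfl ha.1
    · exact absurd rfl ha.1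
    · exact absurd rfl hb.1
    · exact Iff.rfl
  rw [fgraph_split (pendant Gr v) none, h1, h2]

/-! ### Adjacency facts for the complicated building -/

section CB
variable {ι : Type*} {V : ι → Type*} (G : ∀ i, SimpleGraph (V i)) (v : ∀ i, V i)

lemma cb_adj_none_wi (i : ι) : (complBuilding G v).Adj none (some (.inr i)) := by
  rw [complBuilding, SimpleGraph.fromRel_adj]
  exact ⟨by simp, Or.inr trivial⟩

lemma cb_not_adj_none_inl (a : Σ i, V i) :
    ¬ (complBuilding G v).Adj none (some (.inl a)) := by
  rw [complBuilding, SimpleGraph.fromRel_adj]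
  rintro ⟨-, (h | h)⟩ <;> exact h

lemma cb_adj_inl_inl (a b : Σ i, V i) :
    (complBuilding G v).Adj (some (.inl a)) (some (.inl b)) ↔ (sumGraph G).Adj a b := by
  rw [complBuilding, SimpleGraph.fromRel_adj]
  constructor
  · rintro ⟨hne, (h | h)⟩
    · exact h
    · exact (sumGraph G).symm.symm _ _ h
  · intro h
    refine ⟨?_, Or.inl h⟩
    intro hc
    injection hc with hc1
    injection hc1 with hc2
    exact (sumGraph G).loopless.irrefl a (hc2 ▸ h)
  
lemma cb_adj_inl_inr (i : ι) (a : V i) (j : ι) :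
    (complBuilding G v).Adj (some (.inl ⟨i, a⟩)) (some (.inr j)) ↔ i = j ∧ a = v i := by
  rw [complBuilding, SimpleGraph.fromRel_adj]
  constructor
  · rintro ⟨-, (⟨hij, hav⟩ | h)⟩
    · exact ⟨hij, hav⟩
    · exact h.elim
  · rintro ⟨hij, hav⟩
    exact ⟨by simp, Or.inl ⟨hij, hav⟩⟩

lemma cb_not_adj_inr_inr (i j : ι) :
    ¬ (complBuilding G v).Adj (some (.inr i)) (some (.inr j)) := by
  rw [complBuilding, SimpleGraph.fromRel_adj]
  rintro ⟨-, (h | h)⟩ <;> exact h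

/-- The vertices of the complicated building other than the center, as a disjoint
union of the `Option (V i)`. -/
def buildEquiv1 : ({x : Option ((Σ i, V i) ⊕ ι) | x ≠ none} : Set _)
    ≃ Σ i, Option (V i) where
  toFun x := match x with
    | ⟨some (.inl ⟨i, a⟩), _⟩ => ⟨i, some a⟩
    | ⟨some (.inr i), _⟩ => ⟨i, none⟩
    | ⟨none, h⟩ => absurd rfl h
  invFun y := match y with
    | ⟨i, some a⟩ => ⟨some (.inl ⟨i, a⟩), by simp⟩
    | ⟨i, none⟩ => ⟨some (.inr i), by simp⟩
  left_inv := by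
    rintro ⟨(_ | (⟨i, a⟩ | i)), h⟩
    · exact absurd rfl h
    · rfl
    · rfl
  right_inv := by
    rintro ⟨i, (_ | a)⟩ <;> rfl

/-- The non-neighbours of the center of the complicated building, as the disjoint
union of the `V i`. -/
def buildEquiv2 : ({x : Option ((Σ i, V i) ⊕ ι) |
      x ≠ none ∧ ¬ (complBuilding G v).Adj none x} : Set _) ≃ Σ i, V i where
  toFun x := match x with
    | ⟨some (.inl a), _⟩ => a
    | ⟨some (.inr i), h⟩ => absurd (cb_adj_none_wi G v i) h.2
    | ⟨none, h⟩ => absurd rfl h.1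
  invFun a := ⟨some (.inl a), by simp, cb_not_adj_none_inl G v a⟩
  left_inv := by
    rintro ⟨(_ | (a | i)), h⟩
    · exact absurd rfl h.1
    · rfl
    · exact absurd (cb_adj_none_wi G v i) h.2
  right_inv := fun a => rfl

end CB

open Classical in
theorem complBuilding_f {ι : Type*} [Fintype ι] {V : ι → Type*} [∀ i, Fintype (V i)]
    (G : ∀ i, SimpleGraph (V i)) (v : ∀ i, V i) (n m : ι → ℤ)
    (hn : ∀ i, fgraph (G i) = n i) (hm : ∀ i, fdel (G i) {u | u ≠ v i} = m i) :
    fgraph (complBuilding G v) = (∏ i, (n i - m i)) - ∏ i, n i ∧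
    fdel (complBuilding G v) {x | x ≠ none} = ∏ i, (n i - m i) := by
  have key2 : fdel (complBuilding G v) {x | x ≠ none} = ∏ i, (n i - m i) := by
    unfold fdel
    refine ((fgraph_congr_inst _).trans
      (fgraph_eq_of_equiv _ (sumGraph (fun i => pendant (G i) (v i))) (buildEquiv1) ?_)).trans ?_
    · rintro ⟨(_ | (⟨i, a⟩ | i)), ha⟩ ⟨(_ | (⟨j, b⟩ | j)), hb⟩
      · exact absurd rfl ha
      · exact absurd rfl ha
      · exact absurd rfl ha
      · exact absurd rfl hb
      · -- inl-inl
        refine (cb_adj_inl_inl G v ⟨i, a⟩ ⟨j, b⟩).trans ?_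
        constructor
        · rintro ⟨h, hadj⟩; subst h; exact ⟨rfl, hadj⟩
        · rintro ⟨h, hadj⟩; subst h; exact ⟨rfl, hadj⟩
      · -- inl-inr
        refine (cb_adj_inl_inr G v i a j).trans ?_
        constructor
        · rintro ⟨hij, hav⟩; subst hij; exact ⟨rfl, hav⟩
        · rintro ⟨h, hadj⟩; subst h; exact ⟨rfl, hadj⟩
      · exact absurd rfl hb
      · -- inr-inl
        rw [show ((complBuilding G v).induce {x | x ≠ none}).Adj ⟨some (.inr i), ha⟩
            ⟨some (.inl ⟨j, b⟩), hb⟩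
          ↔ (complBuilding G v).Adj (some (.inl ⟨j, b⟩)) (some (.inr i)) from
            (complBuilding G v).adj_comm _ _, cb_adj_inl_inr G v j b i]
        constructor
        · rintro ⟨hji, hbv⟩; subst hji; exact ⟨rfl, hbv⟩
        · rintro ⟨h, hadj⟩; subst h; exact ⟨rfl, hadj⟩
      · -- inr-inr
        constructor
        · intro h; exact absurd h (cb_not_adj_inr_inr G v i j)
        · rintro ⟨h, hadj⟩; subst h; exact hadj.elim
    · rw [fgraph_sigma]
      exact Finset.prod_congr rfl fun i _ => by rw [fgraph_pendant, hn i, hm i]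
  have key1 : fdel (complBuilding G v)
      {x | x ≠ none ∧ ¬ (complBuilding G v).Adj none x} = ∏ i, n i := by
    unfold fdel
    refine ((fgraph_congr_inst _).trans
      (fgraph_eq_of_equiv _ (sumGraph G) (buildEquiv2 G v) ?_)).trans ?_
    · rintro ⟨(_ | (a | i)), ha⟩ ⟨(_ | (b | j)), hb⟩
      · exact absurd rfl ha.1
      · exact absurd rfl ha.1
      · exact absurd rfl ha.1
      · exact absurd rfl hb.1
      · exact cb_adj_inl_inl G v a b
      · exact absurd (cb_adj_none_wi G v j) hb.2
      · exact absurd rfl hb.1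
      · exact absurd (cb_adj_none_wi G v i) ha.2
      · exact absurd (cb_adj_none_wi G v i) ha.2
    · rw [fgraph_sigma]
      exact Finset.prod_congr rfl fun i _ => hn i
  refine ⟨?_, key2⟩
  rw [fgraph_split (complBuilding G v) none, key2, key1]
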